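/- arXiv:0809.1545 — 3 statements merged into one kernel-verified Lean document; each statement's English description precedes it below -/
import Mathlib

section
/- Let F be a distribution function on ℝ with sup_{x∈ℝ, x≠0}|x|^α(1_{x>0}(1−F(x)) + 1_{x<0}F(x)) = K < ∞, where 0 < α < 2. Then for every β > 0 and every ε > 0, ∫_{(−ε,ε]} x² dF(x/β) ≤ 2K(1 + 2/(2−α)) β^α ε^{2−α}. -/
open MeasureTheory Set

theorem truncated_second_moment_bound {Ω : Type*} [MeasurableSpace Ω]
    (μ : Measure Ω) [IsProbabilityMeasure μ]
    (X : Ω → ℝ) (hX : Measurable X)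
    (α : ℝ) (hα0 : 0 < α) (hα2 : α < 2) (K : ℝ)
    (hplus : ∀ x : ℝ, 0 < x → (μ {ω | x < X ω}).toReal ≤ K * x ^ (-α))
    (hminus : ∀ x : ℝ, x < 0 → (μ {ω | X ω ≤ x}).toReal ≤ K * |x| ^ (-α))
    (β ε : ℝ) (hβ : 0 < β) (hε : 0 < ε) :
    ∫⁻ ω in {ω | |β * X ω| ≤ ε}, ENNReal.ofReal ((β * X ω) ^ 2) ∂μ
      ≤ ENNReal.ofReal (2 * K * (1 + 2 / (2 - α)) * β ^ α * ε ^ (2 - α)) := by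
  have hK : 0 ≤ K := by
    have h := hplus 1 one_pos
    have h2 : (0:ℝ) ≤ (μ {ω | 1 < X ω}).toReal := ENNReal.toReal_nonneg
    simpa using h2.trans h
  have hd : (0:ℝ) < 2 - α := by linarith
  have hβα : (0:ℝ) ≤ β ^ α := Real.rpow_nonneg hβ.le α
  have hεd : (0:ℝ) ≤ ε ^ (2 - α) := Real.rpow_nonneg hε.le _
  set f : Ω → ℝ := fun ω => if |β * X ω| ≤ ε then |β * X ω| else 0 with hf_def
  have hS : MeasurableSet {ω | |β * X ω| ≤ ε} :=
    measurableSet_le (hX.const_mul β).abs measurable_const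
  have hf_m : Measurable f := Measurable.ite hS (hX.const_mul β).abs measurable_const
  have hf_nn : ∀ ω, 0 ≤ f ω := by
    intro ω; simp only [hf_def]; split <;> positivity
  have hf_le : ∀ ω, f ω ≤ ε := by
    intro ω; simp only [hf_def]; split
    · assumption
    · exact hε.le
  -- rewrite LHS
  have step1 : ∫⁻ ω in {ω | |β * X ω| ≤ ε}, ENNReal.ofReal ((β * X ω) ^ 2) ∂μ
      = ∫⁻ ω, ENNReal.ofReal (∫ t in (0:ℝ)..f ω, 2 * t) ∂μ := by
    rw [← lintegral_indicator hS]
    refine lintegral_congr fun ω => ?_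
    have hsq : ∀ a : ℝ, ∫ t in (0:ℝ)..a, 2 * t = a ^ 2 := by
      intro a
      rw [intervalIntegral.integral_const_mul, integral_id]
      ring
    rw [hsq]
    by_cases h : |β * X ω| ≤ ε
    · have hm : ω ∈ {ω | |β * X ω| ≤ ε} := h
      rw [indicator_of_mem hm]
      simp only [hf_def, if_pos h, sq_abs]
    · have hm : ω ∉ {ω | |β * X ω| ≤ ε} := h
      rw [indicator_of_notMem hm]
      simp only [hf_def, if_neg h]; simp
  rw [step1]
  rw [lintegral_comp_eq_lintegral_meas_lt_mul (g := fun t => 2 * t) μ (ae_of_all _ hf_nn) hf_m.aemeasurable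
      (fun t _ => (continuous_const.mul continuous_id').intervalIntegrable 0 t)
      ((ae_restrict_iff' measurableSet_Ioi).2 (ae_of_all _ fun t ht => by
        have h0 : (0:ℝ) < t := ht; positivity))]
  -- tail bound
  have tail : ∀ t : ℝ, 0 < t →
      μ {a | t < f a} ≤ ENNReal.ofReal (2 * K * β ^ α * t ^ (-α)) := by
    intro t ht
    have htβ : 0 < t / β := div_pos ht hβ
    have hsub : {a | t < f a} ⊆ {a | t / β < X a} ∪ {a | X a ≤ -(t / β)} := by
      intro a ha
      have hfa : t < |β * X a| := by
        simp only [hf_def, mem_setOf_eq] at ha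
        by_cases h : |β * X a| ≤ ε
        · rwa [if_pos h] at ha
        · rw [if_neg h] at ha; linarith
      have h1 : t / β < |X a| := by
        rw [abs_mul, abs_of_pos hβ] at hfa
        rw [div_lt_iff₀ hβ]
        linarith [mul_comm β |X a|]
      rcases lt_abs.mp h1 with h | h
      · exact Or.inl h
      · exact Or.inr (by simp only [mem_setOf_eq]; linarith)
    have hnn1 : (0:ℝ) ≤ K * (t / β) ^ (-α) :=
      mul_nonneg hK (Real.rpow_nonneg htβ.le _)
    have hA : μ {a | t / β < X a} ≤ ENNReal.ofReal (K * (t / β) ^ (-α)) := by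
      rw [ENNReal.le_ofReal_iff_toReal_le (measure_ne_top μ _) hnn1]
      exact hplus _ htβ
    have hB : μ {a | X a ≤ -(t / β)} ≤ ENNReal.ofReal (K * (t / β) ^ (-α)) := by
      rw [ENNReal.le_ofReal_iff_toReal_le (measure_ne_top μ _) hnn1]
      have := hminus (-(t / β)) (by linarith)
      rwa [abs_neg, abs_of_pos htβ] at this
    have hdiv : (t / β) ^ (-α) = β ^ α * t ^ (-α) := by
      rw [Real.div_rpow ht.le hβ.le, Real.rpow_neg hβ.le, div_eq_mul_inv, inv_inv]
      ring
    calc μ {a | t < f a}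
        ≤ μ ({a | t / β < X a} ∪ {a | X a ≤ -(t / β)}) := measure_mono hsub
      _ ≤ μ {a | t / β < X a} + μ {a | X a ≤ -(t / β)} := measure_union_le _ _
      _ ≤ ENNReal.ofReal (K * (t / β) ^ (-α)) + ENNReal.ofReal (K * (t / β) ^ (-α)) :=
          add_le_add hA hB
      _ = ENNReal.ofReal (2 * K * β ^ α * t ^ (-α)) := by
          rw [← ENNReal.ofReal_add hnn1 hnn1, hdiv]; ring_nf
  -- bound the layer-cake integral
  have step2 : ∫⁻ t in Ioi (0:ℝ), μ {a | t < f a} * ENNReal.ofReal (2 * t)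
      ≤ ∫⁻ t in Ioi (0:ℝ),
          (Ioc (0:ℝ) ε).indicator
            (fun t => ENNReal.ofReal ((2 * K * β ^ α * t ^ (-α)) * (2 * t))) t := by
    refine setLIntegral_mono' measurableSet_Ioi fun t ht => ?_
    have ht0 : (0:ℝ) < t := ht
    by_cases hle : t ≤ ε
    · have hm : t ∈ Ioc (0:ℝ) ε := ⟨ht0, hle⟩
      rw [indicator_of_mem hm]
      have hnn : (0:ℝ) ≤ 2 * K * β ^ α * t ^ (-α) :=
        mul_nonneg (mul_nonneg (by linarith) hβα) (Real.rpow_nonneg ht0.le _)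
      exact le_trans (mul_le_mul_left (tail t ht0) _)
        (le_of_eq (ENNReal.ofReal_mul hnn).symm)
    · have hempty : {a | t < f a} = ∅ := by
        ext a; simp only [mem_setOf_eq, mem_empty_iff_false, iff_false, not_lt]
        linarith [hf_le a]
      rw [hempty]
      simp
  refine le_trans step2 ?_
  rw [setLIntegral_indicator measurableSet_Ioc,
      inter_eq_self_of_subset_left Ioc_subset_Ioi_self]
  have heq : ∫⁻ t in Ioc (0:ℝ) ε, ENNReal.ofReal ((2 * K * β ^ α * t ^ (-α)) * (2 * t))
      = ∫⁻ t in Ioc (0:ℝ) ε, ENNReal.ofReal ((4 * K * β ^ α) * t ^ (1 - α)) := by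
    refine setLIntegral_congr_fun measurableSet_Ioc (fun t ht => ?_)
    congr 1
    have h1 : t ^ (1 - α) = t * t ^ (-α) := by
      rw [sub_eq_add_neg, Real.rpow_add ht.1, Real.rpow_one]
    rw [h1]; ring
  rw [heq]
  have hint : IntegrableOn (fun t : ℝ => (4 * K * β ^ α) * t ^ (1 - α)) (Ioc 0 ε) :=
    ((intervalIntegral.intervalIntegrable_rpow' (by linarith : (-1:ℝ) < 1 - α)).const_mul _).1
  rw [← ofReal_integral_eq_lintegral_ofReal hint
      ((ae_restrict_iff' measurableSet_Ioc).2 (ae_of_all _ fun t ht => by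
        have h0 : (0:ℝ) < t := ht.1
        have : (0:ℝ) ≤ t ^ (1 - α) := Real.rpow_nonneg h0.le _
        positivity))]
  have hval : ∫ t in Ioc (0:ℝ) ε, (4 * K * β ^ α) * t ^ (1 - α)
      = (4 * K * β ^ α) * (ε ^ (2 - α) / (2 - α)) := by
    rw [← intervalIntegral.integral_of_le hε.le, intervalIntegral.integral_const_mul,
        integral_rpow (Or.inl (by linarith : (-1:ℝ) < 1 - α))]
    rw [show (1:ℝ) - α + 1 = 2 - α by ring, Real.zero_rpow (ne_of_gt hd)]
    ring
  rw [hval]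
  apply ENNReal.ofReal_le_ofReal
  have key : 4 / (2 - α) ≤ 2 * (1 + 2 / (2 - α)) := by
    rw [div_le_iff₀ hd] at *
    have h2 : 2 / (2 - α) * (2 - α) = 2 := div_mul_cancel₀ 2 (ne_of_gt hd)
    nlinarith
  have hC : (0:ℝ) ≤ K * β ^ α * ε ^ (2 - α) := by positivity
  calc 4 * K * β ^ α * (ε ^ (2 - α) / (2 - α))
      = (4 / (2 - α)) * (K * β ^ α * ε ^ (2 - α)) := by ring
    _ ≤ (2 * (1 + 2 / (2 - α))) * (K * β ^ α * ε ^ (2 - α)) :=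
        mul_le_mul_of_nonneg_right key hC
    _ = 2 * K * (1 + 2 / (2 - α)) * β ^ α * ε ^ (2 - α) := by ring
end

section
/- With the recursive random weights β_{j,n} as above and s > 0 with E[L^s+R^s] < ∞, one has E[M_{n+1}^{(s)} | 𝒢_n] = M_n^{(s)} (1 + S(s)/n) almost surely, where M_n^{(s)} = Σ_{j=1}^n β_{j,n}^s, S(s) = E[L^s+R^s] − 1, and 𝒢_n is the σ-algebra generated by (I_1,…,I_{n−1}, L_1,R_1,…,L_{n−1},R_{n−1}). In particular, if E[L^s+R^s] = 1 then (M_n^{(s)})_n is a martingale with respect to (𝒢_n)_n. -/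
open MeasureTheory ProbabilityTheory

/-- The recursive random weights `β_{j,n}` of McKean trees: `kacWeight L R I n j ω`
is the weight `β_{j,n}(ω)` (for `1 ≤ j ≤ n`), built by splitting the `I_n`-th weight
into `(L_n β_{I_n,n}, R_n β_{I_n,n})`. -/
noncomputable def kacWeight {Ω : Type*} (L R : ℕ → Ω → ℝ) (I : ℕ → Ω → ℕ) :
    ℕ → ℕ → Ω → ℝ
  | 0, _, _ => 0
  | 1, j, _ => if j = 1 then 1 else 0
  | (n + 2), j, ω =>
      if j < I (n + 1) ω then kacWeight L R I (n + 1) j ω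
      else if j = I (n + 1) ω then L (n + 1) ω * kacWeight L R I (n + 1) j ω
      else if j = I (n + 1) ω + 1 then R (n + 1) ω * kacWeight L R I (n + 1) (j - 1) ω
      else kacWeight L R I (n + 1) (j - 1) ω

/-- `M_n^{(s)} = Σ_{j=1}^n β_{j,n}^s`. -/
noncomputable def kacM {Ω : Type*} (L R : ℕ → Ω → ℝ) (I : ℕ → Ω → ℕ)
    (s : ℝ) (n : ℕ) (ω : Ω) : ℝ :=
  ∑ j ∈ Finset.Icc 1 n, kacWeight L R I n j ω ^ s

/-- Joint family encoding the coefficient pairs `(L_n, R_n)` and the indices `I_n`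
as one indexed family of random vectors, used to state their mutual independence. -/
noncomputable def kacFamily {Ω : Type*} (L R : ℕ → Ω → ℝ) (I : ℕ → Ω → ℕ) :
    ℕ ⊕ ℕ → Ω → ℝ × ℝ :=
  Sum.elim (fun n ω => (L n ω, R n ω)) (fun n ω => ((I n ω : ℝ), 0))

/-- The σ-algebra `𝒢_n` generated by `I_1, …, I_{n-1}, L_1, R_1, …, L_{n-1}, R_{n-1}`. -/
def kacSigma {Ω : Type*} (L R : ℕ → Ω → ℝ) (I : ℕ → Ω → ℕ) (n : ℕ) :
    MeasurableSpace Ω :=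
  ⨆ k ∈ Finset.Icc 1 (n - 1),
    (MeasurableSpace.comap (L k) inferInstance ⊔ MeasurableSpace.comap (R k) inferInstance
      ⊔ MeasurableSpace.comap (I k) inferInstance)

section Aux

variable {Ω : Type*} {L R : ℕ → Ω → ℝ} {I : ℕ → Ω → ℕ}

lemma kacWeight_nonneg (hL : ∀ n ω, 0 ≤ L n ω) (hR : ∀ n ω, 0 ≤ R n ω) :
    ∀ n j ω, 0 ≤ kacWeight L R I n j ω := by
  intro n
  induction n using Nat.strong_induction_on with
  | _ n ih =>
    match n with
    | 0 => intro j ω; simp [kacWeight]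
    | 1 => intro j ω; simp only [kacWeight]; split <;> norm_num
    | (m+2) =>
      intro j ω
      simp only [kacWeight]
      split
      · exact ih (m+1) (by omega) j ω
      split
      · exact mul_nonneg (hL _ _) (ih (m+1) (by omega) j ω)
      split
      · exact mul_nonneg (hR _ _) (ih (m+1) (by omega) _ ω)
      · exact ih (m+1) (by omega) _ ω

lemma triple_le_kacSigma {n k : ℕ} (hk : 1 ≤ k) (hk' : k ≤ n - 1) :
    (MeasurableSpace.comap (L k) inferInstance ⊔ MeasurableSpace.comap (R k) inferInstance
      ⊔ MeasurableSpace.comap (I k) inferInstance) ≤ kacSigma L R I n :=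
  le_biSup
    (fun k => MeasurableSpace.comap (L k) inferInstance
      ⊔ MeasurableSpace.comap (R k) inferInstance
      ⊔ MeasurableSpace.comap (I k) inferInstance)
    (Finset.mem_Icc.mpr ⟨hk, hk'⟩)

lemma measurable_L_kacSigma {n k : ℕ} (hk : 1 ≤ k) (hk' : k ≤ n - 1) :
    Measurable[kacSigma L R I n] (L k) :=
  Measurable.of_comap_le
    ((le_sup_of_le_left le_sup_left).trans (triple_le_kacSigma hk hk'))

lemma measurable_R_kacSigma {n k : ℕ} (hk : 1 ≤ k) (hk' : k ≤ n - 1) :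
    Measurable[kacSigma L R I n] (R k) :=
  Measurable.of_comap_le
    ((le_sup_of_le_left le_sup_right).trans (triple_le_kacSigma hk hk'))

lemma measurable_I_kacSigma {n k : ℕ} (hk : 1 ≤ k) (hk' : k ≤ n - 1) :
    Measurable[kacSigma L R I n] (I k) :=
  Measurable.of_comap_le (le_sup_right.trans (triple_le_kacSigma hk hk'))

lemma kacSigma_le {m0 : MeasurableSpace Ω} (hL : ∀ k, Measurable (L k))
    (hR : ∀ k, Measurable (R k)) (hI : ∀ k, Measurable (I k)) (n : ℕ) :
    kacSigma L R I n ≤ m0 := by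
  refine iSup₂_le fun k _ => ?_
  exact sup_le (sup_le (hL k).comap_le (hR k).comap_le) (hI k).comap_le

lemma kacSigma_mono_succ (n : ℕ) : kacSigma L R I n ≤ kacSigma L R I (n+1) := by
  refine iSup₂_le fun k hk => ?_
  simp only [Finset.mem_Icc] at hk
  exact triple_le_kacSigma hk.1 (by omega)

lemma measurable_kacWeight : ∀ n j, Measurable[kacSigma L R I n] (kacWeight L R I n j) := by
  intro n
  induction n using Nat.strong_induction_on with
  | _ n ih =>
    match n with
    | 0 => intro j; simp only [kacWeight]; exact measurable_const
    | 1 => intro j; simp only [kacWeight]; exact measurable_const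
    | (m+2) =>
      intro j
      have hI : Measurable[kacSigma L R I (m+2)] (I (m+1)) :=
        measurable_I_kacSigma (by omega) (by omega)
      have hLm : Measurable[kacSigma L R I (m+2)] (L (m+1)) :=
        measurable_L_kacSigma (by omega) (by omega)
      have hRm : Measurable[kacSigma L R I (m+2)] (R (m+1)) :=
        measurable_R_kacSigma (by omega) (by omega)
      have ihm : ∀ j, Measurable[kacSigma L R I (m+2)] (kacWeight L R I (m+1) j) :=
        fun j => (ih (m+1) (by omega) j).mono (kacSigma_mono_succ (m+1)) le_rfl
      simp only [kacWeight]
      refine Measurable.ite (hI (MeasurableSet.of_discrete (s := {x | j < x}))) (ihm j) ?_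
      refine Measurable.ite (hI (MeasurableSet.of_discrete (s := {x | j = x})))
        (hLm.mul (ihm j)) ?_
      exact Measurable.ite (hI (MeasurableSet.of_discrete (s := {x | j = x + 1})))
        (hRm.mul (ihm (j-1))) (ihm (j-1))

lemma measurable_kacM (hs : 0 ≤ s) (n : ℕ) :
    Measurable[kacSigma L R I n] (kacM L R I s n) := by
  unfold kacM
  exact Finset.measurable_sum _ fun j _ =>
    (Real.continuous_rpow_const hs).measurable.comp (measurable_kacWeight n j)

lemma kacM_one (s : ℝ) : kacM L R I s 1 = fun _ => 1 := by
  funext ω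
  simp [kacM, kacWeight]

lemma kacM_succ_eq (hL : ∀ n ω, 0 ≤ L n ω) (hR : ∀ n ω, 0 ≤ R n ω) (s : ℝ)
    (m : ℕ) (ω : Ω) (h1 : 1 ≤ I (m+1) ω) (h2 : I (m+1) ω ≤ m+1) :
    kacM L R I s (m+2) ω = kacM L R I s (m+1) ω
      + (L (m+1) ω ^ s + R (m+1) ω ^ s - 1)
        * kacWeight L R I (m+1) (I (m+1) ω) ω ^ s := by
  set k := I (m+1) ω with hk
  set W := fun j => kacWeight L R I (m+1) j ω with hW
  have hW0 : ∀ j, 0 ≤ W j := fun j => kacWeight_nonneg hL hR _ j ω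
  have hicc : ∀ N : ℕ, Finset.Icc 1 N = Finset.Ioc 0 N := fun N => by
    rw [← Finset.Icc_add_one_left_eq_Ioc]; rfl
  have hsplit : ∀ j, kacWeight L R I (m+2) j ω =
      if j < k then W j else if j = k then L (m+1) ω * W j
      else if j = k + 1 then R (m+1) ω * W (j-1) else W (j-1) := fun j => by
    simp only [kacWeight, ← hk, hW]
  have e1 : kacM L R I s (m+2) ω
      = (∑ j ∈ Finset.Ioc 0 (k+1), kacWeight L R I (m+2) j ω ^ s)
        + ∑ j ∈ Finset.Ioc (k+1) (m+2), kacWeight L R I (m+2) j ω ^ s := by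
    rw [kacM, hicc, ← Finset.sum_Ioc_consecutive _ (Nat.zero_le (k+1)) (by omega)]
  have e2 : ∑ j ∈ Finset.Ioc (k+1) (m+2), kacWeight L R I (m+2) j ω ^ s
      = ∑ j ∈ Finset.Ioc k (m+1), W j ^ s := by
    rw [show Finset.Ioc (k+1) (m+2) = (Finset.Ioc k (m+1)).map (addRightEmbedding 1) by
      rw [Finset.map_add_right_Ioc], Finset.sum_map]
    refine Finset.sum_congr rfl fun j hj => ?_
    simp only [Finset.mem_Ioc] at hj
    rw [addRightEmbedding_apply, hsplit, if_neg (by omega), if_neg (by omega),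
      if_neg (by omega), Nat.add_sub_cancel]
  have e4 : kacWeight L R I (m+2) (k+1) ω ^ s = R (m+1) ω ^ s * W k ^ s := by
    rw [hsplit, if_neg (by omega), if_neg (by omega), if_pos rfl,
      Nat.add_sub_cancel, Real.mul_rpow (hR _ _) (hW0 k)]
  have e5 : ∑ j ∈ Finset.Ioc 0 k, kacWeight L R I (m+2) j ω ^ s
      = ∑ j ∈ Finset.Ioc 0 k,
          (W j ^ s + if j = k then (L (m+1) ω ^ s - 1) * W k ^ s else 0) := by
    refine Finset.sum_congr rfl fun j hj => ?_
    simp only [Finset.mem_Ioc] at hj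
    rcases eq_or_lt_of_le hj.2 with hjk | hjk
    · rw [hsplit, if_neg (by omega), if_pos hjk, hjk,
        Real.mul_rpow (hL _ _) (hW0 k), if_pos rfl]
      ring
    · rw [hsplit, if_pos hjk, if_neg (by omega)]
      ring
  have e3 : ∑ j ∈ Finset.Ioc 0 (k+1), kacWeight L R I (m+2) j ω ^ s
      = (∑ j ∈ Finset.Ioc 0 k, W j ^ s)
        + ((L (m+1) ω ^ s - 1) * W k ^ s + R (m+1) ω ^ s * W k ^ s) := by
    rw [Finset.sum_Ioc_succ_top (Nat.zero_le k), e4, e5, Finset.sum_add_distrib,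
      Finset.sum_ite_eq' (Finset.Ioc 0 k) k
        (fun _ => (L (m+1) ω ^ s - 1) * W k ^ s),
      if_pos (Finset.mem_Ioc.mpr ⟨h1, le_rfl⟩)]
    ring
  have e6 : kacM L R I s (m+1) ω
      = (∑ j ∈ Finset.Ioc 0 k, W j ^ s) + ∑ j ∈ Finset.Ioc k (m+1), W j ^ s := by
    rw [kacM, hicc, ← Finset.sum_Ioc_consecutive _ (Nat.zero_le k) (by omega : k ≤ m+1)]
  rw [e1, e2, e3, e6]
  ring

lemma kac_ae_index {m0 : MeasurableSpace Ω} (μ : Measure Ω) [IsProbabilityMeasure μ]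
    (hImeas : ∀ k, Measurable (I k)) {n : ℕ} (hn : 1 ≤ n)
    (hunif : ∀ k ∈ Finset.Icc 1 n, μ {ω | I n ω = k} = (n : ENNReal)⁻¹) :
    ∀ᵐ ω ∂μ, 1 ≤ I n ω ∧ I n ω ≤ n := by
  set B : Set Ω := ⋃ k ∈ Finset.Icc 1 n, {ω | I n ω = k} with hB
  have hBmeas : ∀ k : ℕ, MeasurableSet {ω | I n ω = k} := fun k =>
    (hImeas n) (MeasurableSet.of_discrete (s := {k}))
  have hBm : MeasurableSet B :=
    (Finset.Icc 1 n).measurableSet_biUnion fun k _ => hBmeas k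
  have hμB : μ B = 1 := by
    rw [hB, measure_biUnion_finset ?_ fun k _ => hBmeas k]
    · rw [Finset.sum_congr rfl fun k hk => hunif k hk, Finset.sum_const,
        Nat.card_Icc, Nat.add_sub_cancel, nsmul_eq_mul]
      exact ENNReal.mul_inv_cancel (by exact_mod_cast (by omega : n ≠ 0))
        (ENNReal.natCast_ne_top n)
    · intro a _ b _ hab
      refine Set.disjoint_left.mpr fun ω ha hb => hab ?_
      rw [← ha, ← hb]
  have hcompl : μ Bᶜ = 0 := by
    rw [prob_compl_eq_zero_iff hBm]
    exact hμB
  refine (MeasureTheory.ae_iff).mpr (measure_mono_null ?_ hcompl)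
  intro ω hω
  rw [Set.mem_compl_iff]
  intro hmem
  rw [hB] at hmem
  simp only [Set.mem_iUnion, Finset.mem_Icc, Set.mem_setOf_eq] at hmem
  obtain ⟨k, ⟨hk1, hk2⟩, hIk⟩ := hmem
  exact hω ⟨by omega, by omega⟩

lemma comap_I_le (k : ℕ) :
    MeasurableSpace.comap (I k) inferInstance ≤
      MeasurableSpace.comap (kacFamily L R I (Sum.inr k)) inferInstance := by
  rintro s ⟨A, -, rfl⟩
  refine ⟨(fun i : ℕ => ((i : ℝ), (0 : ℝ))) '' A,
    (Set.Countable.image (Set.to_countable A) _).measurableSet, ?_⟩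
  ext ω
  simp only [kacFamily, Sum.elim_inr, Set.mem_preimage, Set.mem_image]
  constructor
  · rintro ⟨i, hi, hix⟩
    have h1 : (i : ℝ) = (I k ω : ℝ) := congrArg Prod.fst hix
    have : i = I k ω := Nat.cast_injective h1
    rwa [this] at hi
  · intro h
    exact ⟨I k ω, h, rfl⟩

lemma comap_L_le (k : ℕ) :
    MeasurableSpace.comap (L k) inferInstance ≤
      MeasurableSpace.comap (kacFamily L R I (Sum.inl k)) inferInstance := by
  rintro s ⟨A, hA, rfl⟩
  exact ⟨Prod.fst ⁻¹' A, measurable_fst hA, rfl⟩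

lemma comap_R_le (k : ℕ) :
    MeasurableSpace.comap (R k) inferInstance ≤
      MeasurableSpace.comap (kacFamily L R I (Sum.inl k)) inferInstance := by
  rintro s ⟨A, hA, rfl⟩
  exact ⟨Prod.snd ⁻¹' A, measurable_snd hA, rfl⟩

lemma indep_indepFun {β γ : Type*} [MeasurableSpace β] [MeasurableSpace γ]
    {m0 m1 m2 : MeasurableSpace Ω} {μ : @Measure Ω m0} {f : Ω → β} {g : Ω → γ}
    (h : @Indep Ω m1 m2 m0 μ) (hf : Measurable[m1] f) (hg : Measurable[m2] g) :
    @IndepFun Ω β γ m0 _ _ f g μ :=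
  indep_of_indep_of_le_left (indep_of_indep_of_le_right h hg.comap_le) hf.comap_le

lemma kac_key {m0 : MeasurableSpace Ω} (μ : Measure Ω) [IsProbabilityMeasure μ]
    (hLmeas : ∀ n, Measurable (L n)) (hRmeas : ∀ n, Measurable (R n))
    (hImeas : ∀ n, Measurable (I n))
    (hLpos : ∀ n ω, 0 ≤ L n ω) (hRpos : ∀ n ω, 0 ≤ R n ω)
    (hiid : ∀ n, 1 ≤ n →
      μ.map (fun ω => (L n ω, R n ω)) = μ.map (fun ω => (L 1 ω, R 1 ω)))
    (hunif : ∀ n, 1 ≤ n → ∀ k ∈ Finset.Icc 1 n, μ {ω | I n ω = k} = (n : ENNReal)⁻¹)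
    (hindep : iIndepFun (kacFamily L R I) μ)
    (s : ℝ) (hs : 0 < s)
    (hint : Integrable (fun ω => L 1 ω ^ s + R 1 ω ^ s) μ)
    (n : ℕ) (hn : 1 ≤ n) (hMint : Integrable (kacM L R I s n) μ) :
    Integrable (kacM L R I s (n+1)) μ ∧
    ∀ A : Set Ω, MeasurableSet[kacSigma L R I n] A →
      ∫ ω in A, kacM L R I s (n+1) ω ∂μ
        = (1 + ((∫ ω, (L 1 ω ^ s + R 1 ω ^ s) ∂μ) - 1) / n)
            * ∫ ω in A, kacM L R I s n ω ∂μ := by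
  classical
  have hGle : kacSigma L R I n ≤ m0 := kacSigma_le hLmeas hRmeas hImeas n
  have hWmeasG : ∀ k, Measurable[kacSigma L R I n] fun ω => kacWeight L R I n k ω ^ s :=
    fun k => (Real.continuous_rpow_const hs.le).measurable.comp (measurable_kacWeight n k)
  have hWmeas : ∀ k, Measurable fun ω => kacWeight L R I n k ω ^ s :=
    fun k => (hWmeasG k).mono hGle le_rfl
  have hW0 : ∀ k ω, 0 ≤ kacWeight L R I n k ω ^ s :=
    fun k ω => Real.rpow_nonneg (kacWeight_nonneg hLpos hRpos n k ω) s
  have hM0 : ∀ ω, 0 ≤ kacM L R I s n ω := fun ω => Finset.sum_nonneg fun j _ => hW0 j ω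
  have hWle : ∀ k ∈ Finset.Icc 1 n, ∀ ω,
      kacWeight L R I n k ω ^ s ≤ kacM L R I s n ω :=
    fun k hk ω => Finset.single_le_sum (fun j _ => hW0 j ω) hk
  have hWint : ∀ k ∈ Finset.Icc 1 n, Integrable (fun ω => kacWeight L R I n k ω ^ s) μ :=
    fun k hk => hMint.mono ((hWmeas k).aestronglyMeasurable)
      (Filter.Eventually.of_forall fun ω => by
        rw [Real.norm_eq_abs, Real.norm_eq_abs, abs_of_nonneg (hW0 k ω),
          abs_of_nonneg (hM0 ω)]
        exact hWle k hk ω)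
  have hφmeas : Measurable fun p : ℝ × ℝ => p.1 ^ s + p.2 ^ s :=
    ((Real.continuous_rpow_const hs.le).measurable.comp measurable_fst).add
      ((Real.continuous_rpow_const hs.le).measurable.comp measurable_snd)
  have hpairn : AEMeasurable (fun ω => (L n ω, R n ω)) μ :=
    ((hLmeas n).prodMk (hRmeas n)).aemeasurable
  have hpair1 : AEMeasurable (fun ω => (L 1 ω, R 1 ω)) μ :=
    ((hLmeas 1).prodMk (hRmeas 1)).aemeasurable
  have hXint : Integrable (fun ω => L n ω ^ s + R n ω ^ s) μ := by
    have h1 : Integrable (fun p : ℝ × ℝ => p.1 ^ s + p.2 ^ s)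
        (μ.map fun ω => (L n ω, R n ω)) := by
      rw [hiid n hn, integrable_map_measure hφmeas.aestronglyMeasurable hpair1]
      exact hint
    rw [integrable_map_measure hφmeas.aestronglyMeasurable hpairn] at h1
    exact h1
  have hXval : ∫ ω, (L n ω ^ s + R n ω ^ s) ∂μ = ∫ ω, (L 1 ω ^ s + R 1 ω ^ s) ∂μ := by
    calc ∫ ω, (L n ω ^ s + R n ω ^ s) ∂μ
        = ∫ p, (p.1 ^ s + p.2 ^ s) ∂(μ.map fun ω => (L n ω, R n ω)) :=
          (integral_map hpairn hφmeas.aestronglyMeasurable).symm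
      _ = ∫ p, (p.1 ^ s + p.2 ^ s) ∂(μ.map fun ω => (L 1 ω, R 1 ω)) := by rw [hiid n hn]
      _ = ∫ ω, (L 1 ω ^ s + R 1 ω ^ s) ∂μ := integral_map hpair1 hφmeas.aestronglyMeasurable
  set Xf : Ω → ℝ := fun ω => L n ω ^ s + R n ω ^ s - 1 with hXf
  have hXfint : Integrable Xf μ := hXint.sub (integrable_const 1)
  have hXfval : ∫ ω, Xf ω ∂μ = (∫ ω, (L 1 ω ^ s + R 1 ω ^ s) ∂μ) - 1 := by
    rw [hXf]
    rw [integral_sub hXint (integrable_const 1), integral_const]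
    simp [hXval]
  have hiIndep : iIndep (fun i =>
      MeasurableSpace.comap (kacFamily L R I i) inferInstance) μ :=
    (iIndepFun_iff_iIndep _ _ _).mp hindep
  have hfam_meas : ∀ i, Measurable (kacFamily L R I i) := by
    rintro (k | k)
    · exact (hLmeas k).prodMk (hRmeas k)
    · exact ((Measurable.of_discrete (f := (Nat.cast : ℕ → ℝ))).comp
        (hImeas k)).prodMk measurable_const
  have hle : ∀ i, MeasurableSpace.comap (kacFamily L R I i) inferInstance ≤ m0 :=
    fun i => (hfam_meas i).comap_le
  have hGle' : ∀ (T : Set (ℕ ⊕ ℕ)),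
      (∀ k, 1 ≤ k → k ≤ n - 1 → Sum.inl k ∈ T ∧ Sum.inr k ∈ T) →
      kacSigma L R I n
        ≤ ⨆ i ∈ T, MeasurableSpace.comap (kacFamily L R I i) inferInstance := by
    intro T hT
    refine iSup₂_le fun k hk => ?_
    simp only [Finset.mem_Icc] at hk
    obtain ⟨h1, h2⟩ := hT k hk.1 hk.2
    refine sup_le (sup_le ((comap_L_le k).trans (le_biSup
        (f := fun i => MeasurableSpace.comap (kacFamily L R I i) inferInstance) h1))
      ((comap_R_le k).trans (le_biSup
        (f := fun i => MeasurableSpace.comap (kacFamily L R I i) inferInstance) h1)))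
      ((comap_I_le k).trans (le_biSup
        (f := fun i => MeasurableSpace.comap (kacFamily L R I i) inferInstance) h2))
  have hIndep1 : Indep (MeasurableSpace.comap (kacFamily L R I (Sum.inl n)) inferInstance)
      ((MeasurableSpace.comap (I n) inferInstance) ⊔ kacSigma L R I n) μ := by
    have h := indep_iSup_of_disjoint (S := {Sum.inl n}) (T := {i | i ≠ Sum.inl n})
      hle hiIndep (by simp [Set.disjoint_left])
    refine indep_of_indep_of_le_right (indep_of_indep_of_le_left h ?_) ?_
    · exact le_biSup
        (f := fun i => MeasurableSpace.comap (kacFamily L R I i) inferInstance) rfl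
    · refine sup_le ((comap_I_le n).trans (le_biSup
        (f := fun i => MeasurableSpace.comap (kacFamily L R I i) inferInstance)
        (by simp))) (hGle' _ ?_)
      intro k h1 h2
      constructor
      · simp only [Set.mem_setOf_eq, ne_eq, Sum.inl.injEq]
        omega
      · simp
  have hIndep2 : Indep (MeasurableSpace.comap (I n) inferInstance) (kacSigma L R I n) μ := by
    have h := indep_iSup_of_disjoint (S := {Sum.inr n}) (T := {i | i ≠ Sum.inr n})
      hle hiIndep (by simp [Set.disjoint_left])
    refine indep_of_indep_of_le_right (indep_of_indep_of_le_left h ?_) (hGle' _ ?_)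
    · exact (comap_I_le n).trans (le_biSup
        (f := fun i => MeasurableSpace.comap (kacFamily L R I i) inferInstance) rfl)
    · intro k h1 h2
      constructor
      · simp
      · simp only [Set.mem_setOf_eq, ne_eq, Sum.inr.injEq]
        omega
  have hsetIk : ∀ k : ℕ,
      MeasurableSet[MeasurableSpace.comap (I n) inferInstance] {ω | I n ω = k} :=
    fun k => ⟨{x | x = k}, MeasurableSet.of_discrete, rfl⟩
  have hXfmeas1 : Measurable[MeasurableSpace.comap (kacFamily L R I (Sum.inl n))
      inferInstance] Xf := by
    have hpm : Measurable[MeasurableSpace.comap (kacFamily L R I (Sum.inl n)) inferInstance]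
        (kacFamily L R I (Sum.inl n)) := Measurable.of_comap_le le_rfl
    exact (hφmeas.sub measurable_const).comp hpm
  have hFint : ∀ k ∈ Finset.Icc 1 n, ∀ A : Set Ω, MeasurableSet[kacSigma L R I n] A →
      Integrable (fun ω => Xf ω * ({ω' | I n ω' = k}.indicator
        (A.indicator fun ω'' => kacWeight L R I n k ω'' ^ s) ω)) μ ∧
      ∫ ω, Xf ω * ({ω' | I n ω' = k}.indicator
          (A.indicator fun ω'' => kacWeight L R I n k ω'' ^ s) ω) ∂μ
        = ((∫ ω, (L 1 ω ^ s + R 1 ω ^ s) ∂μ) - 1) * (n : ℝ)⁻¹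
            * ∫ ω in A, kacWeight L R I n k ω ^ s ∂μ := by
    intro k hk A hA
    set W2 : Ω → ℝ := A.indicator (fun ω => kacWeight L R I n k ω ^ s) with hW2
    have hW2measG : Measurable[kacSigma L R I n] W2 := (hWmeasG k).indicator hA
    have hW2meas : Measurable W2 := hW2measG.mono hGle le_rfl
    have hW2int : Integrable W2 μ := hMint.mono hW2meas.aestronglyMeasurable
      (Filter.Eventually.of_forall fun ω => by
        rw [Real.norm_eq_abs, Real.norm_eq_abs, abs_of_nonneg (hM0 ω), hW2,
          Set.indicator_apply]
        split
        · rw [abs_of_nonneg (hW0 k ω)]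
          exact hWle k hk ω
        · simpa using hM0 ω)
    set Wk : Ω → ℝ := {ω' | I n ω' = k}.indicator W2 with hWk
    have hsetIk' : MeasurableSet[(MeasurableSpace.comap (I n) inferInstance)
        ⊔ kacSigma L R I n] {ω | I n ω = k} := by
      exact (le_sup_left (α := MeasurableSpace Ω)) _ (hsetIk k)
    have hWkmeas' : Measurable[(MeasurableSpace.comap (I n) inferInstance)
        ⊔ kacSigma L R I n] Wk :=
      (hW2measG.mono le_sup_right le_rfl).indicator hsetIk'
    have hWkmeas : Measurable Wk :=
      hWkmeas'.mono (sup_le (hImeas n).comap_le hGle) le_rfl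
    have hWkint : Integrable Wk μ := hW2int.mono hWkmeas.aestronglyMeasurable
      (Filter.Eventually.of_forall fun ω => norm_indicator_le_norm_self _ _)
    have hIndepXW : IndepFun Xf Wk μ := indep_indepFun hIndep1 hXfmeas1 hWkmeas'
    have hmul_int : Integrable (fun ω => Xf ω * Wk ω) μ :=
      hIndepXW.integrable_mul hXfint hWkint
    have hmul : ∫ ω, Xf ω * Wk ω ∂μ = (∫ ω, Xf ω ∂μ) * ∫ ω, Wk ω ∂μ :=
      hIndepXW.integral_mul_eq_mul_integral hXfint.aestronglyMeasurable hWkint.aestronglyMeasurable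
    have hind1 : IndepFun ({ω' | I n ω' = k}.indicator (fun _ => (1:ℝ))) W2 μ :=
      indep_indepFun hIndep2 (measurable_const.indicator (hsetIk k)) hW2measG
    have hsetamb : MeasurableSet {ω | I n ω = k} :=
      (hImeas n) (MeasurableSet.of_discrete (s := {x | x = k}))
    have hindint : Integrable ({ω' | I n ω' = k}.indicator (fun _ => (1:ℝ))) μ :=
      (integrable_const (1:ℝ)).indicator hsetamb
    have hWkeq : Wk = fun ω => ({ω' | I n ω' = k}.indicator (fun _ => (1:ℝ)) ω) * W2 ω := by
      funext ω
      rw [hWk, Set.indicator_apply, Set.indicator_apply]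
      split <;> simp
    have hWkval : ∫ ω, Wk ω ∂μ = (n:ℝ)⁻¹ * ∫ ω in A, kacWeight L R I n k ω ^ s ∂μ := by
      have h0 : ∫ ω, Wk ω ∂μ
          = (∫ ω, {ω' | I n ω' = k}.indicator (fun _ => (1:ℝ)) ω ∂μ) * ∫ ω, W2 ω ∂μ := by
        rw [hWkeq]
        exact hind1.integral_mul_eq_mul_integral hindint.aestronglyMeasurable hW2int.aestronglyMeasurable
      rw [h0]
      congr 1
      · have hone : ({ω' | I n ω' = k}.indicator (fun _ => (1:ℝ)))
            = {ω' | I n ω' = k}.indicator (1 : Ω → ℝ) := rfl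
        rw [hone, integral_indicator_one hsetamb, measureReal_def, hunif n hn k hk]
        simp [ENNReal.toReal_inv]
      · rw [hW2, integral_indicator (hGle _ hA)]
    exact ⟨hmul_int, by rw [hmul, hXfval, hWkval]; ring⟩
  obtain ⟨m, rfl⟩ : ∃ m, n = m + 1 := ⟨n - 1, by omega⟩
  have h_ae : kacM L R I s (m+2) =ᵐ[μ] fun ω => kacM L R I s (m+1) ω
      + ∑ k ∈ Finset.Icc 1 (m+1), (if I (m+1) ω = k then
          Xf ω * kacWeight L R I (m+1) k ω ^ s else 0) := by
    filter_upwards [kac_ae_index μ hImeas hn (hunif (m+1) hn)] with ω hω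
    rw [kacM_succ_eq hLpos hRpos s m ω hω.1 hω.2]
    congr 1
    rw [Finset.sum_ite_eq (Finset.Icc 1 (m+1)) (I (m+1) ω)
      (fun k => Xf ω * kacWeight L R I (m+1) k ω ^ s),
      if_pos (Finset.mem_Icc.mpr ⟨hω.1, hω.2⟩)]
  have hFint' : ∀ k ∈ Finset.Icc 1 (m+1), Integrable
      (fun ω => if I (m+1) ω = k then Xf ω * kacWeight L R I (m+1) k ω ^ s else 0) μ := by
    intro k hk
    have h := (hFint k hk Set.univ MeasurableSet.univ).1
    have heq : (fun ω => Xf ω * ({ω' | I (m+1) ω' = k}.indicator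
        (Set.univ.indicator fun ω'' => kacWeight L R I (m+1) k ω'' ^ s) ω))
        = fun ω => if I (m+1) ω = k then Xf ω * kacWeight L R I (m+1) k ω ^ s else 0 := by
      funext ω
      simp only [Set.indicator_univ, Set.indicator_apply, Set.mem_setOf_eq, mul_ite, mul_zero]
    rw [← heq]
    exact h
  refine ⟨(hMint.add (integrable_finset_sum _ hFint')).congr h_ae.symm, ?_⟩
  intro A hA
  have hAm : MeasurableSet A := hGle _ hA
  have hsum_int : ∀ k ∈ Finset.Icc 1 (m+1), IntegrableOn
      (fun ω => if I (m+1) ω = k then Xf ω * kacWeight L R I (m+1) k ω ^ s else 0) A μ :=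
    fun k hk => (hFint' k hk).integrableOn
  rw [setIntegral_congr_ae hAm (h_ae.mono fun ω h _ => h)]
  rw [integral_add hMint.integrableOn
    (integrable_finset_sum _ fun k hk => hFint' k hk).integrableOn]
  rw [integral_finset_sum _ hsum_int]
  have hterm : ∀ k ∈ Finset.Icc 1 (m+1),
      ∫ ω in A, (if I (m+1) ω = k then Xf ω * kacWeight L R I (m+1) k ω ^ s else 0) ∂μ
        = ((∫ ω, (L 1 ω ^ s + R 1 ω ^ s) ∂μ) - 1) * (((m:ℕ)+1 : ℝ))⁻¹
            * ∫ ω in A, kacWeight L R I (m+1) k ω ^ s ∂μ := by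
    intro k hk
    have h2 := (hFint k hk A hA).2
    rw [← integral_indicator hAm]
    rw [show (((m:ℕ)+1 : ℝ))⁻¹ = (((m+1 : ℕ)) : ℝ)⁻¹ by push_cast; ring]
    rw [← h2]
    congr 1
    funext ω
    rw [Set.indicator_apply, Set.indicator_apply, Set.indicator_apply]
    by_cases h1 : ω ∈ A <;> by_cases hI2 : I (m+1) ω = k <;>
      simp [h1, hI2, Set.mem_setOf_eq]
  rw [Finset.sum_congr rfl hterm, ← Finset.mul_sum]
  have hsum : ∑ k ∈ Finset.Icc 1 (m+1), ∫ ω in A, kacWeight L R I (m+1) k ω ^ s ∂μ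
      = ∫ ω in A, kacM L R I s (m+1) ω ∂μ := by
    rw [← integral_finset_sum _ fun k hk => (hWint k hk).integrableOn]
    simp only [kacM]
  rw [hsum]
  push_cast
  ring

end Aux

theorem condexp_kacM {Ω : Type*} [MeasurableSpace Ω] (μ : Measure Ω)
    [IsProbabilityMeasure μ]
    (L R : ℕ → Ω → ℝ) (I : ℕ → Ω → ℕ)
    (hLmeas : ∀ n, Measurable (L n)) (hRmeas : ∀ n, Measurable (R n))
    (hImeas : ∀ n, Measurable (I n))
    (hLpos : ∀ n ω, 0 ≤ L n ω) (hRpos : ∀ n ω, 0 ≤ R n ω)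
    (hiid : ∀ n, 1 ≤ n →
      μ.map (fun ω => (L n ω, R n ω)) = μ.map (fun ω => (L 1 ω, R 1 ω)))
    (hunif : ∀ n, 1 ≤ n → ∀ k ∈ Finset.Icc 1 n, μ {ω | I n ω = k} = (n : ENNReal)⁻¹)
    (hindep : iIndepFun (kacFamily L R I) μ)
    (s : ℝ) (hs : 0 < s)
    (hint : Integrable (fun ω => L 1 ω ^ s + R 1 ω ^ s) μ)
    (S : ℝ) (hS : S = (∫ ω, (L 1 ω ^ s + R 1 ω ^ s) ∂μ) - 1)
    (n : ℕ) (hn : 1 ≤ n) :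
    (μ[kacM L R I s (n + 1)|kacSigma L R I n]
        =ᵐ[μ] fun ω => kacM L R I s n ω * (1 + S / n)) ∧
    (S = 0 → μ[kacM L R I s (n + 1)|kacSigma L R I n] =ᵐ[μ] kacM L R I s n) := by
  have hGle : kacSigma L R I n ≤ ‹MeasurableSpace Ω› := kacSigma_le hLmeas hRmeas hImeas n
  have hMint : ∀ m, 1 ≤ m → Integrable (kacM L R I s m) μ := by
    intro m hm
    induction m with
    | zero => omega
    | succ p ih =>
      rcases Nat.lt_or_ge 1 (p+1) with h | h
      · have hp : 1 ≤ p := by omega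
        exact (kac_key μ hLmeas hRmeas hImeas hLpos hRpos hiid hunif hindep s hs hint
          p hp (ih hp)).1
      · have hp0 : p = 0 := by omega
        subst hp0
        rw [kacM_one]
        exact integrable_const 1
  obtain ⟨hint1, hkey⟩ := kac_key μ hLmeas hRmeas hImeas hLpos hRpos hiid hunif hindep
    s hs hint n hn (hMint n hn)
  have hmain : (fun ω => kacM L R I s n ω * (1 + S / n)) =ᵐ[μ]
      μ[kacM L R I s (n+1)|kacSigma L R I n] := by
    refine ae_eq_condExp_of_forall_setIntegral_eq hGle hint1
      (fun A hA _ => ((hMint n hn).mul_const _).integrableOn)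
      (fun A hA _ => ?_) ?_
    · rw [integral_mul_const, hkey A hA, hS]
      ring
    · exact StronglyMeasurable.aestronglyMeasurable
        (((measurable_kacM hs.le n).mul_const _).stronglyMeasurable)
  refine ⟨hmain.symm, fun h0 => hmain.symm.trans (Filter.Eventually.of_forall fun ω => ?_)⟩
  simp [h0]
end

section
/- Let F₀ be a distribution function satisfying x^α(1−F₀(x)) → c⁺ as x → +∞ for some α, c⁺ > 0. Let (b_{j,n}) with 1 ≤ j ≤ n be a triangular array of positive reals such that M_n := Σ_{j=1}^n b_{j,n}^α → m ∈ [0,∞) and max_j b_{j,n} → 0 as n → ∞. Then for each x > 0, Σ_{j=1}^n (1 − F₀(x / b_{j,n})) → c⁺ m x^{−α} as n → ∞. -/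
open Filter

theorem sum_of_scaled_tails_tendsto
    (F₀ : ℝ → ℝ) (α cplus : ℝ) (hα : 0 < α) (hc : 0 < cplus)
    (htail : Tendsto (fun x : ℝ => x ^ α * (1 - F₀ x)) atTop (nhds cplus))
    (b : ℕ → ℕ → ℝ) (hb : ∀ n, ∀ j ∈ Finset.Icc 1 n, 0 < b n j)
    (m : ℝ) (hm : 0 ≤ m)
    (hM : Tendsto (fun n => ∑ j ∈ Finset.Icc 1 n, b n j ^ α) atTop (nhds m))
    (hmax : ∀ ε : ℝ, 0 < ε → ∀ᶠ n in atTop, ∀ j ∈ Finset.Icc 1 n, b n j < ε) :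
    ∀ x : ℝ, 0 < x →
      Tendsto (fun n => ∑ j ∈ Finset.Icc 1 n, (1 - F₀ (x / b n j)))
        atTop (nhds (cplus * m * x ^ (-α))) := by
  intro x hx
  have hxneg : (0:ℝ) < x ^ (-α) := Real.rpow_pos_of_pos hx _
  have hxα : (0:ℝ) < x ^ α := Real.rpow_pos_of_pos hx _
  have hxinv : x ^ (-α) = (x ^ α)⁻¹ := by
    rw [Real.rpow_neg hx.le]
  have key : Tendsto (fun n => (∑ j ∈ Finset.Icc 1 n, (1 - F₀ (x / b n j)))
      - cplus * x ^ (-α) * ∑ j ∈ Finset.Icc 1 n, b n j ^ α) atTop (nhds 0) := by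
    rw [NormedAddCommGroup.tendsto_nhds_zero]
    intro ε hε
    set δ := ε / (2 * (x ^ (-α) * (m + 1))) with hδdef
    have hδ : 0 < δ := by positivity
    have h1 := (Metric.tendsto_nhds.mp htail) δ hδ
    rw [eventually_atTop] at h1
    obtain ⟨A₀, hA₀⟩ := h1
    set A := max A₀ 1 with hA
    have hApos : (0:ℝ) < A := lt_of_lt_of_le one_pos (le_max_right _ _)
    have h2 := hmax (x / A) (by positivity)
    have h3 : ∀ᶠ n in atTop, |(∑ j ∈ Finset.Icc 1 n, b n j ^ α) - m| < 1 := by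
      have := (Metric.tendsto_nhds.mp hM) 1 one_pos
      simpa [Real.dist_eq] using this
    filter_upwards [h2, h3] with n hn hMn
    have hbα : ∀ j ∈ Finset.Icc 1 n, (0:ℝ) < b n j ^ α := fun j hj =>
      Real.rpow_pos_of_pos (hb n j hj) _
    have hterm : ∀ j ∈ Finset.Icc 1 n,
        |(1 - F₀ (x / b n j)) - cplus * x ^ (-α) * b n j ^ α|
          ≤ δ * (x ^ (-α) * b n j ^ α) := by
      intro j hj
      have hbj := hb n j hj
      have hblt := hn j hj
      have hyA : A ≤ x / b n j := by
        rw [le_div_iff₀ hbj]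
        have : A * b n j < A * (x / A) := by
          apply mul_lt_mul_of_pos_left hblt hApos
        calc A * b n j ≤ A * (x / A) := this.le
          _ = x := by field_simp
      have hg := hA₀ (x / b n j) (le_trans (le_max_left _ _) hyA)
      rw [Real.dist_eq] at hg
      have hbαj := hbα j hj
      have hrw : (1 - F₀ (x / b n j))
          = (b n j ^ α / x ^ α) * ((x / b n j) ^ α * (1 - F₀ (x / b n j))) := by
        rw [Real.div_rpow hx.le hbj.le]
        field_simp
      rw [hrw]
      have heq : (b n j ^ α / x ^ α) * ((x / b n j) ^ α * (1 - F₀ (x / b n j)))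
          - cplus * x ^ (-α) * b n j ^ α
          = (b n j ^ α / x ^ α) * (((x / b n j) ^ α * (1 - F₀ (x / b n j))) - cplus) := by
        rw [hxinv]; ring
      rw [heq, abs_mul, abs_of_pos (by positivity)]
      have h4 : b n j ^ α / x ^ α = x ^ (-α) * b n j ^ α := by
        rw [hxinv]; ring
      rw [h4]
      have := mul_le_mul_of_nonneg_left hg.le
        (le_of_lt (by positivity : (0:ℝ) < x ^ (-α) * b n j ^ α))
      linarith [this]
    have hsum : |(∑ j ∈ Finset.Icc 1 n, (1 - F₀ (x / b n j)))
        - cplus * x ^ (-α) * ∑ j ∈ Finset.Icc 1 n, b n j ^ α|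
        ≤ δ * (x ^ (-α) * ∑ j ∈ Finset.Icc 1 n, b n j ^ α) := by
      rw [Finset.mul_sum, ← Finset.sum_sub_distrib]
      calc |∑ j ∈ Finset.Icc 1 n, ((1 - F₀ (x / b n j)) - cplus * x ^ (-α) * b n j ^ α)|
          ≤ ∑ j ∈ Finset.Icc 1 n, |(1 - F₀ (x / b n j)) - cplus * x ^ (-α) * b n j ^ α| :=
            Finset.abs_sum_le_sum_abs _ _
        _ ≤ ∑ j ∈ Finset.Icc 1 n, δ * (x ^ (-α) * b n j ^ α) :=
            Finset.sum_le_sum hterm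
        _ = δ * (x ^ (-α) * ∑ j ∈ Finset.Icc 1 n, b n j ^ α) := by
            rw [Finset.mul_sum, Finset.mul_sum]
    have hMle : (∑ j ∈ Finset.Icc 1 n, b n j ^ α) ≤ m + 1 := by
      have := abs_lt.mp hMn
      linarith [this.2]
    have hMnn : (0:ℝ) ≤ ∑ j ∈ Finset.Icc 1 n, b n j ^ α :=
      Finset.sum_nonneg fun j hj => (hbα j hj).le
    have : δ * (x ^ (-α) * ∑ j ∈ Finset.Icc 1 n, b n j ^ α)
        ≤ δ * (x ^ (-α) * (m + 1)) := by
      apply mul_le_mul_of_nonneg_left _ hδ.le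
      exact mul_le_mul_of_nonneg_left hMle hxneg.le
    have hhalf : δ * (x ^ (-α) * (m + 1)) = ε / 2 := by
      rw [hδdef]; field_simp
    rw [Real.norm_eq_abs]
    calc _ ≤ δ * (x ^ (-α) * ∑ j ∈ Finset.Icc 1 n, b n j ^ α) := hsum
      _ ≤ δ * (x ^ (-α) * (m + 1)) := this
      _ = ε / 2 := hhalf
      _ < ε := by linarith
  have hT : Tendsto (fun n => cplus * x ^ (-α) * ∑ j ∈ Finset.Icc 1 n, b n j ^ α)
      atTop (nhds (cplus * x ^ (-α) * m)) := hM.const_mul _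
  have := key.add hT
  simp only [zero_add] at this
  have heq : (fun n => ((∑ j ∈ Finset.Icc 1 n, (1 - F₀ (x / b n j)))
      - cplus * x ^ (-α) * ∑ j ∈ Finset.Icc 1 n, b n j ^ α)
      + cplus * x ^ (-α) * ∑ j ∈ Finset.Icc 1 n, b n j ^ α)
      = fun n => ∑ j ∈ Finset.Icc 1 n, (1 - F₀ (x / b n j)) := by
    funext n; ring
  rw [heq] at this
  rw [show cplus * m * x ^ (-α) = cplus * x ^ (-α) * m from by ring]
  exact this
end
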